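/- Let μ be a Borel probability measure on (S, d) with ∫ (p₁² + p₂²) μ(d(p₁, p₂, θ)) < ∞. Define F(x̂) = ∫_S d(x, x̂)² μ(dx), p̂₁ = ∫ p₁ dμ, p̂₂ = ∫ p₂ dμ, c̄ = ∫ cos θ dμ, s̄ = ∫ sin θ dμ. If c̄² + s̄² = 0, then F((p̂₁, p̂₂, θ)) has the same value for every θ ∈ [0, 2π), and for every θ ∈ [0, 2π) the point (p̂₁, p̂₂, θ) minimizes F over S. -/

import Mathlib

open MeasureTheory
open scoped ENNReal

noncomputable section

/-- The state space `S = ℝ² × [0, 2π)`. -/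
abbrev S : Type := {x : ℝ × ℝ × ℝ // x.2.2 ∈ Set.Ico (0 : ℝ) (2 * Real.pi)}

/-- The metric `d` on `S`. -/
noncomputable def dS (x y : S) : ℝ :=
  Real.sqrt ((x.1.1 - y.1.1) ^ 2 + (x.1.2.1 - y.1.2.1) ^ 2
    + 2 * (Real.cos x.1.2.2 - Real.cos y.1.2.2) ^ 2
    + 2 * (Real.sin x.1.2.2 - Real.sin y.1.2.2) ^ 2)

/-- The distortion functional `F(x̂) = ∫ d(x, x̂)² μ(dx)`. -/
noncomputable def FF (μ : Measure S) (z : S) : ℝ≥0∞ :=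
  ∫⁻ x, ENNReal.ofReal (dS x z ^ 2) ∂μ

/-- If `c̄² + s̄² = 0`, then `F((p̂₁, p̂₂, θ))` has the same value for every
`θ ∈ [0, 2π)`, and every such point minimizes `F` over `S`. -/
theorem optimal_estimate_of_alpha_zero (μ : Measure S) [IsProbabilityMeasure μ]
    (hmom : ∫⁻ x, ENNReal.ofReal (x.1.1 ^ 2 + x.1.2.1 ^ 2) ∂μ < ⊤)
    (p1 p2 cbar sbar : ℝ)
    (hp1 : p1 = ∫ x, x.1.1 ∂μ) (hp2 : p2 = ∫ x, x.1.2.1 ∂μ)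
    (hc : cbar = ∫ x, Real.cos x.1.2.2 ∂μ) (hs : sbar = ∫ x, Real.sin x.1.2.2 ∂μ)
    (hα : cbar ^ 2 + sbar ^ 2 = 0) :
    (∀ x y : S, x.1.1 = p1 → x.1.2.1 = p2 → y.1.1 = p1 → y.1.2.1 = p2 →
        FF μ x = FF μ y) ∧
    (∀ x : S, x.1.1 = p1 → x.1.2.1 = p2 → ∀ y : S, FF μ x ≤ FF μ y) := by
  have hc0 : cbar = 0 := by nlinarith [sq_nonneg cbar, sq_nonneg sbar]
  have hs0 : sbar = 0 := by nlinarith [sq_nonneg cbar, sq_nonneg sbar]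
  -- measurability of coordinates
  have m1 : Measurable fun x : S => x.1.1 := measurable_fst.comp measurable_subtype_coe
  have m2 : Measurable fun x : S => x.1.2.1 :=
    measurable_fst.comp (measurable_snd.comp measurable_subtype_coe)
  have m3 : Measurable fun x : S => x.1.2.2 :=
    measurable_snd.comp (measurable_snd.comp measurable_subtype_coe)
  have msq : Measurable fun x : S => x.1.1 ^ 2 + x.1.2.1 ^ 2 :=
    (m1.pow_const 2).add (m2.pow_const 2)
  have hint0 : Integrable (fun x : S => x.1.1 ^ 2 + x.1.2.1 ^ 2) μ := by
    refine ⟨msq.aestronglyMeasurable, ?_⟩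
    have : (∫⁻ a, ‖(a.1.1 ^ 2 + a.1.2.1 ^ 2 : ℝ)‖ₑ ∂μ)
        = ∫⁻ a, ENNReal.ofReal (a.1.1 ^ 2 + a.1.2.1 ^ 2) ∂μ := by
      refine lintegral_congr fun a => ?_
      rw [← ofReal_norm, Real.norm_eq_abs, abs_of_nonneg (by positivity)]
    simpa [HasFiniteIntegral, this] using hmom
  have hint1 : Integrable (fun x : S => x.1.1) μ := by
    refine (hint0.add (integrable_const 1)).mono' m1.aestronglyMeasurable ?_
    filter_upwards with x
    simp only [Real.norm_eq_abs, Pi.add_apply]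
    nlinarith [sq_abs x.1.1, sq_nonneg (|x.1.1| - 1), sq_nonneg x.1.2.1]
  have hint2 : Integrable (fun x : S => x.1.2.1) μ := by
    refine (hint0.add (integrable_const 1)).mono' m2.aestronglyMeasurable ?_
    filter_upwards with x
    simp only [Real.norm_eq_abs, Pi.add_apply]
    nlinarith [sq_abs x.1.2.1, sq_nonneg (|x.1.2.1| - 1), sq_nonneg x.1.1]
  have hintc : Integrable (fun x : S => Real.cos x.1.2.2) μ := by
    refine (integrable_const (1 : ℝ)).mono'
      (Real.measurable_cos.comp m3).aestronglyMeasurable ?_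
    filter_upwards with x
    simp [Real.norm_eq_abs, Real.abs_cos_le_one]
  have hints : Integrable (fun x : S => Real.sin x.1.2.2) μ := by
    refine (integrable_const (1 : ℝ)).mono'
      (Real.measurable_sin.comp m3).aestronglyMeasurable ?_
    filter_upwards with x
    simp [Real.norm_eq_abs, Real.abs_sin_le_one]
  set M := ∫ x, (x.1.1 ^ 2 + x.1.2.1 ^ 2) ∂μ with hM
  have key : ∀ z : S, FF μ z
      = ENNReal.ofReal (M + (z.1.1 ^ 2 + z.1.2.1 ^ 2 + 4)
          - 2 * z.1.1 * p1 - 2 * z.1.2.1 * p2) := by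
    intro z
    have hdeq : ∀ x : S, dS x z ^ 2
        = x.1.1 ^ 2 + x.1.2.1 ^ 2 + (z.1.1 ^ 2 + z.1.2.1 ^ 2 + 4)
          - 2 * z.1.1 * x.1.1 - 2 * z.1.2.1 * x.1.2.1
          - 4 * Real.cos z.1.2.2 * Real.cos x.1.2.2
          - 4 * Real.sin z.1.2.2 * Real.sin x.1.2.2 := by
      intro x
      have h0 : dS x z ^ 2 = (x.1.1 - z.1.1) ^ 2 + (x.1.2.1 - z.1.2.1) ^ 2
          + 2 * (Real.cos x.1.2.2 - Real.cos z.1.2.2) ^ 2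
          + 2 * (Real.sin x.1.2.2 - Real.sin z.1.2.2) ^ 2 := by
        unfold dS
        exact Real.sq_sqrt (by positivity)
      rw [h0]
      linear_combination 2 * Real.sin_sq_add_cos_sq x.1.2.2
        + 2 * Real.sin_sq_add_cos_sq z.1.2.2
    have I0 := hint0
    have Iconst : Integrable (fun _ : S => z.1.1 ^ 2 + z.1.2.1 ^ 2 + 4) μ :=
      integrable_const _
    have I1 := hint1.const_mul (2 * z.1.1)
    have I2 := hint2.const_mul (2 * z.1.2.1)
    have I3 := hintc.const_mul (4 * Real.cos z.1.2.2)
    have I4 := hints.const_mul (4 * Real.sin z.1.2.2)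
    have hintz : Integrable (fun x : S => dS x z ^ 2) μ := by
      have hfun : (fun x : S => dS x z ^ 2)
          = fun x : S => x.1.1 ^ 2 + x.1.2.1 ^ 2 + (z.1.1 ^ 2 + z.1.2.1 ^ 2 + 4)
              - 2 * z.1.1 * x.1.1 - 2 * z.1.2.1 * x.1.2.1
              - 4 * Real.cos z.1.2.2 * Real.cos x.1.2.2
              - 4 * Real.sin z.1.2.2 * Real.sin x.1.2.2 := funext hdeq
      rw [hfun]
      exact ((((I0.add Iconst).sub I1).sub I2).sub I3).sub I4
    have hFF : FF μ z = ENNReal.ofReal (∫ x, dS x z ^ 2 ∂μ) := by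
      rw [FF, ← ofReal_integral_eq_lintegral_ofReal hintz
        (ae_of_all _ fun x => by positivity)]
    rw [hFF]
    congr 1
    simp only [hdeq]
    have JA : Integrable (fun x : S => x.1.1 ^ 2 + x.1.2.1 ^ 2
        + (z.1.1 ^ 2 + z.1.2.1 ^ 2 + 4)) μ := I0.add Iconst
    have JB : Integrable (fun x : S => x.1.1 ^ 2 + x.1.2.1 ^ 2
        + (z.1.1 ^ 2 + z.1.2.1 ^ 2 + 4) - 2 * z.1.1 * x.1.1) μ := JA.sub I1
    have JC : Integrable (fun x : S => x.1.1 ^ 2 + x.1.2.1 ^ 2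
        + (z.1.1 ^ 2 + z.1.2.1 ^ 2 + 4) - 2 * z.1.1 * x.1.1
        - 2 * z.1.2.1 * x.1.2.1) μ := JB.sub I2
    have JD : Integrable (fun x : S => x.1.1 ^ 2 + x.1.2.1 ^ 2
        + (z.1.1 ^ 2 + z.1.2.1 ^ 2 + 4) - 2 * z.1.1 * x.1.1
        - 2 * z.1.2.1 * x.1.2.1
        - 4 * Real.cos z.1.2.2 * Real.cos x.1.2.2) μ := JC.sub I3
    rw [integral_sub JD I4, integral_sub JC I3, integral_sub JB I2,
        integral_sub JA I1, integral_add I0 Iconst,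
        integral_const_mul, integral_const_mul, integral_const_mul, integral_const_mul,
        integral_const]
    have hcz : (∫ x, Real.cos x.1.2.2 ∂μ) = 0 := by rw [← hc, hc0]
    have hsz : (∫ x, Real.sin x.1.2.2 ∂μ) = 0 := by rw [← hs, hs0]
    simp only [measure_univ, probReal_univ, ENNReal.toReal_one, one_smul, hcz, hsz, mul_zero,
      ← hp1, ← hp2, ← hM]
    ring
  constructor
  · intro x y hx1 hx2 hy1 hy2
    rw [key x, key y, hx1, hx2, hy1, hy2]
  · intro x hx1 hx2 y
    rw [key x, key y, hx1, hx2]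
    apply ENNReal.ofReal_le_ofReal
    nlinarith [sq_nonneg (y.1.1 - p1), sq_nonneg (y.1.2.1 - p2)]

end
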